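/- For g(z) = z^2 + z, if j_1 < j_2 are natural numbers then the polynomials g^{∘j_1}(z) + 2 and g^{∘j_2}(z) + 2 have no common complex root; moreover for any j < n, g^{∘j}(z) + 2 and g^{∘n}(z) + 1 have no common complex root. -/
import Mathlib


noncomputable def g (z : ℂ) : ℂ := z ^ 2 + z

lemma g_aux : ∀ m : ℕ, ∀ w : ℂ, (∃ x : ℝ, 2 ≤ x ∧ w = x) →
    ∃ x : ℝ, 2 ≤ x ∧ g^[m] w = x := by
  intro m
  induction m with
  | zero => intro w h; simpa using h
  | succ k ih =>
      intro w ⟨x, hx, hw⟩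
      rw [Function.iterate_succ_apply]
      apply ih
      refine ⟨x ^ 2 + x, by nlinarith, ?_⟩
      rw [hw]; simp [g]

lemma g_key (j k : ℕ) (z : ℂ) (hj : g^[j] z = -2) (hk : j < k) :
    ∃ x : ℝ, 2 ≤ x ∧ g^[k] z = x := by
  have h1 : g^[j+1] z = 2 := by
    rw [Function.iterate_succ_apply', hj]
    norm_num [g]
  have h2 : g^[k] z = g^[k - (j+1)] (g^[j+1] z) := by
    rw [← Function.iterate_add_apply]
    congr 1
    omega
  rw [h2, h1]
  exact g_aux _ _ ⟨2, le_refl 2, by norm_num⟩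

theorem stmt9 :
    (∀ j₁ j₂ : ℕ, j₁ < j₂ → ∀ z : ℂ, g^[j₁] z = -2 → g^[j₂] z ≠ -2) ∧
    (∀ j n : ℕ, j < n → ∀ z : ℂ, g^[j] z = -2 → g^[n] z ≠ -1) := by
  constructor
  · intro j₁ j₂ h z hz hcon
    obtain ⟨x, hx, hx2⟩ := g_key j₁ j₂ z hz h
    rw [hcon] at hx2
    have : (x : ℂ).re = (-2 : ℂ).re := by rw [hx2]
    simp at this
    linarith
  · intro j n h z hz hcon
    obtain ⟨x, hx, hx2⟩ := g_key j n z hz h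
    rw [hcon] at hx2
    have : (x : ℂ).re = (-1 : ℂ).re := by rw [hx2]
    simp at this
    linarith
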